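/- Let (X,d) be a metric space, x,y ∈ X, and A ⊆ X a closed path-separating set between x and y. Then for every t ∈ [0, width_{x,y}(A)], the set {z ∈ A : pos_A(z) = t} is a path-separating set between x and y. -/

import Mathlib

open MeasureTheory Metric Set Filter
open scoped ENNReal NNReal

noncomputable section

/-- A rectifiable curve from `x` to `y`, encoded via a `1`-Lipschitz
(arclength-type) parametrization on `[0, T]`. -/
structure RectCurve (X : Type*) [MetricSpace X] (x y : X) where
  T : ℝ
  T_nonneg : 0 ≤ T
  toFun : ℝ → X
  lip : LipschitzOnWith 1 toFun (Set.Icc 0 T)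
  source : toFun 0 = x
  target : toFun T = y

/-- Length spent by the curve inside `A` up to time `s`. -/
def RectCurve.lengthInUpTo {X : Type*} [MetricSpace X] {x y : X}
    (c : RectCurve X x y) (A : Set X) (s : ℝ) : ℝ≥0∞ :=
  volume {t : ℝ | t ∈ Set.Icc 0 (min s c.T) ∧ c.toFun t ∈ A}

/-- Total length spent by the curve inside `A`. -/
def RectCurve.lengthIn {X : Type*} [MetricSpace X] {x y : X}
    (c : RectCurve X x y) (A : Set X) : ℝ≥0∞ :=
  c.lengthInUpTo A c.T

/-- Length of the curve. -/
def RectCurve.length {X : Type*} [MetricSpace X] {x y : X}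
    (c : RectCurve X x y) : ℝ≥0∞ :=
  eVariationOn c.toFun (Set.Icc 0 c.T)

/-- The width of `A` with respect to `x, y`: infimum over rectifiable curves
from `x` to `y` of the length spent inside `A` (`∞` if there is no such curve). -/
def width {X : Type*} [MetricSpace X] (x y : X) (A : Set X) : ℝ≥0∞ :=
  ⨅ c : RectCurve X x y, c.lengthIn A

/-- The position function of the set `A` with respect to `x, y`. -/
def posFn {X : Type*} [MetricSpace X] (x y : X) (A : Set X) (z : X) : ℝ≥0∞ :=
  ⨅ (c : RectCurve X x y) (s : ℝ) (_ : s ∈ Set.Icc 0 c.T) (_ : c.toFun s = z),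
    c.lengthInUpTo A s

/-- Topological separating set from `x` to `y`. -/
def IsSepSet {X : Type*} [MetricSpace X] (x y : X) (Ω : Set X) : Prop :=
  IsClosed Ω ∧ ∃ r > 0, Metric.ball x r ⊆ interior Ω ∧ Metric.ball y r ⊆ Ωᶜ

/-- Path-separating set between `x` and `y`: every rectifiable curve from `x`
to `y` meets `A`. -/
def IsPathSep {X : Type*} [MetricSpace X] (x y : X) (A : Set X) : Prop :=
  ∀ c : RectCurve X x y, ∃ t ∈ Set.Icc 0 c.T, c.toFun t ∈ A

/-- Minkowski content of `Ω` with respect to `μ`. -/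
def mink {X : Type*} [MetricSpace X] [MeasurableSpace X] (μ : Measure X) (Ω : Set X) : ℝ≥0∞ :=
  Filter.liminf (fun r : ℝ => μ (Metric.cthickening r Ω \ Ω) / ENNReal.ofReal r)
    (nhdsWithin 0 (Set.Ioi 0))

/-- The Riesz density with poles at `x` and `y` (it vanishes at the poles). -/
def rieszDensity {X : Type*} [MetricSpace X] [MeasurableSpace X] (m : Measure X) (x y : X) (z : X) : ℝ≥0∞ :=
  ENNReal.ofReal (dist x z) / m (Metric.ball x (dist x z))
    + ENNReal.ofReal (dist y z) / m (Metric.ball y (dist y z))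

/-- The `L`-truncated Riesz measure `m_{x,y}^L`. -/
def rieszMeasure {X : Type*} [MetricSpace X] [MeasurableSpace X] (m : Measure X) (x y : X) (L : ℝ) :
    Measure X :=
  m.withDensity
    ((Metric.ball x (2 * L * dist x y) ∪ Metric.ball y (2 * L * dist x y)).indicator
      (rieszDensity m x y))

/-- The local Lipschitz constant `lip u (z)` (with value `0` at isolated points,
since the limsup along the empty filter is `⊥`). -/
def lipConst {X : Type*} [MetricSpace X] (u : X → ℝ) (z : X) : ℝ≥0∞ :=
  Filter.limsup (fun w => ENNReal.ofReal (|u w - u z| / dist w z))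
    (nhdsWithin z {z}ᶜ)

/-- `m` is `C`-doubling. -/
def IsDoubling {X : Type*} [MetricSpace X] [MeasurableSpace X] (m : Measure X) (C : ℝ≥0) : Prop :=
  ∀ (z : X) (r : ℝ), 0 < r → m (Metric.ball z (2 * r)) ≤ C * m (Metric.ball z r)

/-- The separating ratio `m(A)/width_{x,y}(A)`, with the conventions that it is
`∞` when the width vanishes and `0` when the width is infinite. -/
def sepRatio {X : Type*} [MetricSpace X] [MeasurableSpace X] (m : Measure X) (x y : X) (A : Set X) : ℝ≥0∞ :=
  if width x y A = 0 then ⊤ else m A / width x y A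

/-- The support of the measure `m`. -/
def msupport {X : Type*} [MetricSpace X] [MeasurableSpace X] (m : Measure X) : Set X :=
  {z | ∀ r > 0, 0 < m (Metric.ball z r)}

/-- Line integral of a nonnegative density along a rectifiable curve
(in its `1`-Lipschitz parametrization). -/
def lineIntegral {X : Type*} [MetricSpace X] {x y : X}
    (c : RectCurve X x y) (ρ : X → ℝ≥0∞) : ℝ≥0∞ :=
  ∫⁻ t in Set.Icc (0 : ℝ) c.T, ρ (c.toFun t)

/-- Admissible densities for a family of curves. -/
def Adm {X : Type*} [MetricSpace X] [MeasurableSpace X] {x y : X} (Γ : Set (RectCurve X x y)) :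
    Set (X → ℝ≥0∞) :=
  {ρ | Measurable ρ ∧ ∀ c ∈ Γ, 1 ≤ lineIntegral c ρ}

/-- The `p`-modulus of a family of curves with respect to the measure `ν`. -/
def Modulus {X : Type*} [MetricSpace X] [MeasurableSpace X] {x y : X} (p : ℝ)
    (Γ : Set (RectCurve X x y)) (ν : Measure X) : ℝ≥0∞ :=
  ⨅ ρ ∈ Adm Γ, ∫⁻ z, ρ z ^ p ∂ν

end

section AuxStmt8

open MeasureTheory Metric Set Filter
open scoped ENNReal NNReal

variable {X : Type*} [MetricSpace X] {x y : X}

private lemma posFn_eq' (x y : X) (A : Set X) (z : X) :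
    posFn x y A z = ⨅ (c : RectCurve X x y) (s : ℝ) (_ : s ∈ Set.Icc 0 c.T)
      (_ : c.toFun s = z), c.lengthInUpTo A s := rfl

private lemma posFn_le' (A : Set X) (c : RectCurve X x y) {s : ℝ} (hs : s ∈ Set.Icc 0 c.T) :
    posFn x y A (c.toFun s) ≤ c.lengthInUpTo A s := by
  rw [posFn_eq']
  exact iInf_le_of_le c (iInf_le_of_le s (iInf_le_of_le hs (iInf_le _ rfl)))

private lemma dist_le_of_lip (c : RectCurve X x y) {a b : ℝ}
    (ha : a ∈ Set.Icc 0 c.T) (hb : b ∈ Set.Icc 0 c.T) :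
    dist (c.toFun a) (c.toFun b) ≤ |a - b| := by
  simpa [Real.dist_eq] using c.lip.dist_le_mul a ha b hb

/-- Concatenation of `c'` restricted to `[0, σ]` with `c` restricted to `[s, c.T]`. -/
private noncomputable def glue (c' c : RectCurve X x y) (σ s : ℝ)
    (hσ : σ ∈ Set.Icc 0 c'.T) (hs : s ∈ Set.Icc 0 c.T)
    (heq : c'.toFun σ = c.toFun s) : RectCurve X x y where
  T := σ + (c.T - s)
  T_nonneg := by have := hσ.1; have := hs.2; linarith
  toFun u := if u ≤ σ then c'.toFun u else c.toFun (u - σ + s)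
  lip := by
    obtain ⟨hσ0, hσT⟩ := hσ
    obtain ⟨hs0, hsT⟩ := hs
    have key : ∀ u ∈ Set.Icc (0:ℝ) (σ + (c.T - s)), ∀ v ∈ Set.Icc (0:ℝ) (σ + (c.T - s)),
        u ≤ v →
        dist ((fun w => if w ≤ σ then c'.toFun w else c.toFun (w - σ + s)) u)
          ((fun w => if w ≤ σ then c'.toFun w else c.toFun (w - σ + s)) v) ≤ v - u := by
      intro u hu v hv huv
      simp only
      by_cases h1 : v ≤ σ
      · rw [if_pos (huv.trans h1), if_pos h1]
        have := dist_le_of_lip c' (a := u) (b := v)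
          ⟨hu.1, (huv.trans h1).trans hσT⟩ ⟨hu.1.trans huv, h1.trans hσT⟩
        rwa [abs_sub_comm, abs_of_nonneg (sub_nonneg.2 huv)] at this
      · push_neg at h1
        by_cases h2 : u ≤ σ
        · rw [if_pos h2, if_neg (not_le.2 h1)]
          have d1 : dist (c'.toFun u) (c'.toFun σ) ≤ σ - u := by
            have := dist_le_of_lip c' (a := u) (b := σ) ⟨hu.1, h2.trans hσT⟩ ⟨hσ0, hσT⟩
            rwa [abs_sub_comm, abs_of_nonneg (sub_nonneg.2 h2)] at this
          have d2 : dist (c'.toFun σ) (c.toFun (v - σ + s)) ≤ v - σ := by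
            rw [heq]
            have := dist_le_of_lip c (a := s) (b := v - σ + s)
              ⟨hs0, hsT⟩ ⟨by linarith, by linarith [hv.2]⟩
            rw [abs_sub_comm, abs_of_nonneg (by linarith : (0:ℝ) ≤ v - σ + s - s)] at this
            linarith
          calc dist (c'.toFun u) (c.toFun (v - σ + s))
              ≤ dist (c'.toFun u) (c'.toFun σ) + dist (c'.toFun σ) (c.toFun (v - σ + s)) :=
                dist_triangle _ _ _
            _ ≤ (σ - u) + (v - σ) := add_le_add d1 d2
            _ = v - u := by ring
        · push_neg at h2
          rw [if_neg (not_le.2 h2), if_neg (not_le.2 h1)]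
          have := dist_le_of_lip c (a := u - σ + s) (b := v - σ + s)
            ⟨by linarith, by linarith [hu.2]⟩ ⟨by linarith, by linarith [hv.2]⟩
          rwa [abs_sub_comm, abs_of_nonneg (by linarith : (0:ℝ) ≤ v - σ + s - (u - σ + s)),
            show v - σ + s - (u - σ + s) = v - u by ring] at this
    rw [lipschitzOnWith_iff_dist_le_mul]
    intro u hu v hv
    rw [NNReal.coe_one, one_mul, Real.dist_eq]
    rcases le_total u v with h | h
    · have := key u hu v hv h
      rwa [abs_sub_comm, abs_of_nonneg (sub_nonneg.2 h)]
    · have := key v hv u hu h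
      rwa [abs_of_nonneg (sub_nonneg.2 h), dist_comm]
  source := by
    rw [if_pos hσ.1, c'.source]
  target := by
    rcases eq_or_lt_of_le hs.2 with h | h
    · have hTT : σ + (c.T - s) = σ := by rw [← h]; ring
      rw [hTT, if_pos le_rfl, heq, h, c.target]
    · rw [if_neg (by push_neg; linarith : ¬ σ + (c.T - s) ≤ σ),
        show σ + (c.T - s) - σ + s = c.T by ring, c.target]

private lemma glue_T (c' c : RectCurve X x y) (σ s : ℝ)
    (hσ : σ ∈ Set.Icc 0 c'.T) (hs : s ∈ Set.Icc 0 c.T) (heq : c'.toFun σ = c.toFun s) :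
    (glue c' c σ s hσ hs heq).T = σ + (c.T - s) := rfl

private lemma glue_toFun (c' c : RectCurve X x y) (σ s : ℝ)
    (hσ : σ ∈ Set.Icc 0 c'.T) (hs : s ∈ Set.Icc 0 c.T) (heq : c'.toFun σ = c.toFun s)
    (u : ℝ) :
    (glue c' c σ s hσ hs heq).toFun u
      = if u ≤ σ then c'.toFun u else c.toFun (u - σ + s) := rfl

private lemma glue_eval (c' c : RectCurve X x y) (σ s : ℝ)
    (hσ : σ ∈ Set.Icc 0 c'.T) (hs : s ∈ Set.Icc 0 c.T) (heq : c'.toFun σ = c.toFun s)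
    {r : ℝ} (hr : 0 ≤ r) :
    (glue c' c σ s hσ hs heq).toFun (σ + r) = c.toFun (s + r) := by
  rw [glue_toFun]
  rcases eq_or_lt_of_le hr with h | h
  · rw [if_pos (by linarith : σ + r ≤ σ), ← h, add_zero, add_zero, heq]
  · rw [if_neg (by push_neg; linarith : ¬ σ + r ≤ σ),
      show σ + r - σ + s = s + r by ring]

private lemma glue_len (A : Set X) (c' c : RectCurve X x y) (σ s : ℝ)
    (hσ : σ ∈ Set.Icc 0 c'.T) (hs : s ∈ Set.Icc 0 c.T) (heq : c'.toFun σ = c.toFun s)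
    {r : ℝ} (hr : 0 ≤ r) (hrT : s + r ≤ c.T) :
    (glue c' c σ s hσ hs heq).lengthInUpTo A (σ + r)
      ≤ c'.lengthInUpTo A σ
        + volume {u : ℝ | u ∈ Set.Icc s (s + r) ∧ c.toFun u ∈ A} := by
  rw [RectCurve.lengthInUpTo, glue_T,
    min_eq_left (by linarith : σ + r ≤ σ + (c.T - s))]
  have hsub : {u : ℝ | u ∈ Set.Icc 0 (σ + r)
        ∧ (glue c' c σ s hσ hs heq).toFun u ∈ A}
      ⊆ {u : ℝ | u ∈ Set.Icc 0 (min σ c'.T) ∧ c'.toFun u ∈ A}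
        ∪ (fun u => u + (s - σ)) ⁻¹' {u : ℝ | u ∈ Set.Icc s (s + r) ∧ c.toFun u ∈ A} := by
    intro u hu
    obtain ⟨⟨hu0, hur⟩, huA⟩ := hu
    rw [glue_toFun] at huA
    by_cases h : u ≤ σ
    · left
      rw [if_pos h] at huA
      exact ⟨⟨hu0, by rw [min_eq_left hσ.2]; exact h⟩, huA⟩
    · right
      rw [if_neg h] at huA
      push_neg at h
      refine Set.mem_preimage.2 ⟨?_, ?_⟩
      · simp only [Set.mem_Icc]; constructor <;> linarith
      · rwa [show u + (s - σ) = u - σ + s by ring]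
  calc volume {u : ℝ | u ∈ Set.Icc 0 (σ + r) ∧ (glue c' c σ s hσ hs heq).toFun u ∈ A}
      ≤ volume ({u : ℝ | u ∈ Set.Icc 0 (min σ c'.T) ∧ c'.toFun u ∈ A}
        ∪ (fun u => u + (s - σ)) ⁻¹' {u : ℝ | u ∈ Set.Icc s (s + r) ∧ c.toFun u ∈ A}) :=
        measure_mono hsub
    _ ≤ volume {u : ℝ | u ∈ Set.Icc 0 (min σ c'.T) ∧ c'.toFun u ∈ A}
        + volume ((fun u => u + (s - σ)) ⁻¹' {u : ℝ | u ∈ Set.Icc s (s + r) ∧ c.toFun u ∈ A}) :=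
        measure_union_le _ _
    _ = _ := by
        rw [RectCurve.lengthInUpTo, measure_preimage_add_right]

private lemma posFn_mono' (A : Set X) (c : RectCurve X x y) {s s' : ℝ}
    (hs0 : 0 ≤ s) (hss' : s ≤ s') (hs'T : s' ≤ c.T) :
    posFn x y A (c.toFun s') ≤ posFn x y A (c.toFun s)
      + volume {u : ℝ | u ∈ Set.Icc s s' ∧ c.toFun u ∈ A} := by
  conv_rhs => rw [posFn_eq']
  simp only [ENNReal.iInf_add]
  refine le_iInf fun c' => le_iInf fun σ => le_iInf fun hσ => le_iInf fun heqz => ?_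
  have hsIcc : s ∈ Set.Icc 0 c.T := ⟨hs0, hss'.trans hs'T⟩
  have hr : (0:ℝ) ≤ s' - s := sub_nonneg.2 hss'
  have hrT : s + (s' - s) ≤ c.T := by linarith
  have hle := glue_len A c' c σ s hσ hsIcc heqz hr hrT
  have hev := glue_eval c' c σ s hσ hsIcc heqz hr
  rw [show s + (s' - s) = s' by ring] at hle hev
  have hmem : σ + (s' - s) ∈ Set.Icc 0 (glue c' c σ s hσ hsIcc heqz).T := by
    rw [glue_T]
    exact ⟨by linarith [hσ.1], by linarith⟩
  have h1 := posFn_le' A (glue c' c σ s hσ hsIcc heqz) hmem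
  rw [hev] at h1
  exact h1.trans hle

private lemma width_le' (A : Set X) (c : RectCurve X x y) {s : ℝ} (hs : s ∈ Set.Icc 0 c.T) :
    width x y A ≤ posFn x y A (c.toFun s)
      + volume {u : ℝ | u ∈ Set.Icc s c.T ∧ c.toFun u ∈ A} := by
  conv_rhs => rw [posFn_eq']
  simp only [ENNReal.iInf_add]
  refine le_iInf fun c' => le_iInf fun σ => le_iInf fun hσ => le_iInf fun heqz => ?_
  have hr : (0:ℝ) ≤ c.T - s := sub_nonneg.2 hs.2
  have hrT : s + (c.T - s) ≤ c.T := by linarith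
  have hle := glue_len A c' c σ s hσ hs heqz hr hrT
  rw [show s + (c.T - s) = c.T by ring] at hle
  calc width x y A ≤ (glue c' c σ s hσ hs heqz).lengthIn A := iInf_le _ _
    _ = (glue c' c σ s hσ hs heqz).lengthInUpTo A (σ + (c.T - s)) := by
        rw [RectCurve.lengthIn, glue_T]
    _ ≤ _ := hle

end AuxStmt8

theorem stmt8 {X : Type*} [MetricSpace X] (x y : X) (A : Set X) (hA : IsClosed A)
    (hsep : IsPathSep x y A) (t : ℝ≥0∞) (ht : t ≤ width x y A) :
    IsPathSep x y {z ∈ A | posFn x y A z = t} := by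
  intro c
  have hcont : ContinuousOn c.toFun (Set.Icc 0 c.T) := c.lip.continuousOn
  set SA : Set ℝ := Set.Icc 0 c.T ∩ c.toFun ⁻¹' A with hSAdef
  have hSAclosed : IsClosed SA := hcont.preimage_isClosed_of_isClosed isClosed_Icc hA
  have hSAsub : SA ⊆ Set.Icc 0 c.T := Set.inter_subset_left
  have hSAne : SA.Nonempty := by
    obtain ⟨u, hu, huA⟩ := hsep c
    exact ⟨u, hu, huA⟩
  have hSAbddA : BddAbove SA := BddAbove.mono hSAsub bddAbove_Icc
  have hSAbddB : BddBelow SA := BddBelow.mono hSAsub bddBelow_Icc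
  -- the last point of the curve in A
  have hsstar : sSup SA ∈ SA := hSAclosed.csSup_mem hSAne hSAbddA
  have htail : volume {u : ℝ | u ∈ Set.Icc (sSup SA) c.T ∧ c.toFun u ∈ A} = 0 := by
    refine measure_mono_null (fun u hu => ?_) (Real.volume_singleton (a := sSup SA))
    obtain ⟨⟨hu1, hu2⟩, huA⟩ := hu
    have huSA : u ∈ SA := ⟨⟨(hSAsub hsstar).1.trans hu1, hu2⟩, huA⟩
    exact le_antisymm (le_csSup hSAbddA huSA) hu1
  have hstar : t ≤ posFn x y A (c.toFun (sSup SA)) := by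
    have h := width_le' A c (hSAsub hsstar)
    rw [htail, add_zero] at h
    exact ht.trans h
  set S : Set ℝ := {u ∈ SA | t ≤ posFn x y A (c.toFun u)} with hSdef
  have hSne : S.Nonempty := ⟨sSup SA, hsstar, hstar⟩
  have hSsub : S ⊆ SA := Set.sep_subset _ _
  have hSbdd : BddBelow S := BddBelow.mono hSsub hSAbddB
  set s₀ : ℝ := sInf S with hs0def
  have hs0SA : s₀ ∈ SA :=
    hSAclosed.closure_subset (closure_mono hSsub (csInf_mem_closure hSne hSbdd))
  have hs0Icc : s₀ ∈ Set.Icc 0 c.T := hSAsub hs0SA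
  have hs0le : ∀ u ∈ S, s₀ ≤ u := fun u hu => csInf_le hSbdd hu
  -- t ≤ posFn(c s₀)
  have hb : t ≤ posFn x y A (c.toFun s₀) := by
    refine ENNReal.le_of_forall_pos_le_add fun ε hε _ => ?_
    obtain ⟨u, huS, hu⟩ := (csInf_lt_iff hSbdd hSne).1
      (show sInf S < s₀ + (ε:ℝ) by
        rw [← hs0def]; exact lt_add_of_pos_right _ (by exact_mod_cast hε))
    have h2 := posFn_mono' A c hs0Icc.1 (hs0le u huS) (hSAsub (hSsub huS)).2
    have h3 : volume {v : ℝ | v ∈ Set.Icc s₀ u ∧ c.toFun v ∈ A} ≤ (ε : ℝ≥0∞) := by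
      refine le_trans (measure_mono fun v hv => hv.1) ?_
      rw [Real.volume_Icc, ← ENNReal.ofReal_coe_nnreal]
      exact ENNReal.ofReal_le_ofReal (by linarith)
    calc t ≤ posFn x y A (c.toFun u) := huS.2
      _ ≤ posFn x y A (c.toFun s₀) + volume {v : ℝ | v ∈ Set.Icc s₀ u ∧ c.toFun v ∈ A} := h2
      _ ≤ posFn x y A (c.toFun s₀) + ε := add_le_add le_rfl h3
  -- posFn(c s₀) ≤ t
  have hc : posFn x y A (c.toFun s₀) ≤ t := by
    set B : Set ℝ := {u ∈ SA | u < s₀} with hBdef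
    have hBsub : B ⊆ SA := Set.sep_subset _ _
    have hlt : ∀ u ∈ SA, u < s₀ → posFn x y A (c.toFun u) < t := by
      intro u hu hult
      by_contra h
      push_neg at h
      exact absurd (hs0le u ⟨hu, h⟩) (not_le.2 hult)
    by_cases hBne : B.Nonempty
    · have hBbddA : BddAbove B := BddAbove.mono hBsub hSAbddA
      have hs1le : sSup B ≤ s₀ := csSup_le hBne fun u hu => hu.2.le
      have hs1SA : sSup B ∈ SA :=
        hSAclosed.closure_subset (closure_mono hBsub (csSup_mem_closure hBne hBbddA))
      rcases eq_or_lt_of_le hs1le with h | h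
      · -- points of A accumulate at s₀ from the left
        refine ENNReal.le_of_forall_pos_le_add fun ε hε _ => ?_
        obtain ⟨u, huB, hu⟩ := (lt_csSup_iff hBbddA hBne).1
          (show sSup B - (ε:ℝ) < sSup B by
            have : (0:ℝ) < ε := by exact_mod_cast hε
            linarith)
        have h2 := posFn_mono' A c (hSAsub huB.1).1 huB.2.le hs0Icc.2
        have h3 : volume {v : ℝ | v ∈ Set.Icc u s₀ ∧ c.toFun v ∈ A} ≤ (ε : ℝ≥0∞) := by
          refine le_trans (measure_mono fun v hv => hv.1) ?_
          rw [Real.volume_Icc, ← ENNReal.ofReal_coe_nnreal]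
          refine ENNReal.ofReal_le_ofReal ?_
          linarith
        calc posFn x y A (c.toFun s₀)
            ≤ posFn x y A (c.toFun u) + volume {v : ℝ | v ∈ Set.Icc u s₀ ∧ c.toFun v ∈ A} := h2
          _ ≤ t + ε := add_le_add (hlt u huB.1 huB.2).le h3
      · -- gap between sSup B and s₀
        have hmid : volume {v : ℝ | v ∈ Set.Icc (sSup B) s₀ ∧ c.toFun v ∈ A} = 0 := by
          refine measure_mono_null (fun v hv => ?_)
            (((Set.finite_singleton s₀).insert (sSup B)).measure_zero volume)
          obtain ⟨⟨hv1, hv2⟩, hvA⟩ := hv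
          simp only [Set.mem_insert_iff, Set.mem_singleton_iff]
          have hvSA : v ∈ SA := ⟨⟨(hSAsub hs1SA).1.trans hv1, hv2.trans hs0Icc.2⟩, hvA⟩
          rcases eq_or_lt_of_le hv2 with h' | h'
          · exact Or.inr h'
          · exact Or.inl (le_antisymm (le_csSup hBbddA ⟨hvSA, h'⟩) hv1)
        have h2 := posFn_mono' A c (hSAsub hs1SA).1 h.le hs0Icc.2
        rw [hmid, add_zero] at h2
        exact h2.trans (hlt (sSup B) hs1SA h).le
    · -- no point of A strictly before s₀
      have h0 : c.lengthInUpTo A s₀ = 0 := by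
        rw [RectCurve.lengthInUpTo, min_eq_left hs0Icc.2]
        refine measure_mono_null (fun v hv => ?_) (Real.volume_singleton (a := s₀))
        obtain ⟨⟨hv1, hv2⟩, hvA⟩ := hv
        have hvSA : v ∈ SA := ⟨⟨hv1, hv2.trans hs0Icc.2⟩, hvA⟩
        rcases eq_or_lt_of_le hv2 with h' | h'
        · exact h'
        · exact absurd ⟨hvSA, h'⟩ (fun h'' => hBne ⟨v, h''⟩)
      have := posFn_le' A c hs0Icc
      rw [h0] at this
      exact le_trans this zero_le
  exact ⟨s₀, hs0Icc, hs0SA.2, le_antisymm hc hb⟩
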